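/- Let H1, H2, H3, H4 be subgroups of a finite group G. Suppose H1 ∩ H2 = (H1 ∩ H2 ∩ H3)(H1 ∩ H2 ∩ H4), i.e., H1 ∩ H2 equals the product set of its intersections with H3 and with H4. Then the Ingleton inequality holds: |H1| · |H2| · |H3 ∩ H4| · |H1 ∩ H2 ∩ H3| · |H1 ∩ H2 ∩ H4| ≥ |H1 ∩ H2| · |H1 ∩ H3| · |H1 ∩ H4| · |H2 ∩ H3| · |H2 ∩ H4|. -/

import Mathlib

open Pointwise

-- image of A in G ⧸ B is in bijection with A ⧸ B.subgroupOf A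
noncomputable def imgEquiv {G : Type*} [Group G] (A B : Subgroup G) :
    (A ⧸ B.subgroupOf A) ≃ ((A : Set G).image (QuotientGroup.mk (s := B)) : Set (G ⧸ B)) := by
  apply Equiv.ofBijective (fun q => Quotient.liftOn' q
    (fun a => ⟨QuotientGroup.mk (a : G), ⟨a, a.2, rfl⟩⟩)
    (by
      intro a b hab
      rw [QuotientGroup.leftRel_apply, Subgroup.mem_subgroupOf] at hab
      exact Subtype.ext (QuotientGroup.eq.mpr hab)))
  constructor
  · intro q1 q2
    induction q1 using Quotient.inductionOn'
    induction q2 using Quotient.inductionOn'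
    intro hq
    simp only [Quotient.liftOn'_mk'', Subtype.mk.injEq, QuotientGroup.eq] at hq
    exact Quotient.sound' (by rw [QuotientGroup.leftRel_apply, Subgroup.mem_subgroupOf]; exact QuotientGroup.eq.mp (congrArg Subtype.val hq))
  · rintro ⟨y, a, ha, rfl⟩
    exact ⟨QuotientGroup.mk (⟨a, ha⟩ : A), rfl⟩

lemma card_set_mul {G : Type*} [Group G] [Finite G] (A B : Subgroup G) :
    Nat.card ((A : Set G) * (B : Set G) : Set G) * Nat.card (A ⊓ B : Subgroup G)
      = Nat.card A * Nat.card B := by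
  rw [Subgroup.card_mul_eq_card_subgroup_mul_card_quotient B (A : Set G)]
  have h1 : Nat.card ((A : Set G).image (QuotientGroup.mk (s := B)) : Set (G ⧸ B))
      = Nat.card (A ⧸ B.subgroupOf A) := (Nat.card_congr (imgEquiv A B)).symm
  have h2 : Nat.card A = Nat.card (A ⧸ B.subgroupOf A) * Nat.card (B.subgroupOf A) :=
    Subgroup.card_eq_card_quotient_mul_card_subgroup _
  have h3 : Nat.card (B.subgroupOf A) = Nat.card (A ⊓ B : Subgroup G) := by
    rw [← Subgroup.inf_subgroupOf_left]
    exact Nat.card_congr (Subgroup.subgroupOfEquivOfLe inf_le_left).toEquiv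
  rw [h1, h2, h3]
  ring

lemma card_mul_le {G : Type*} [Group G] [Finite G] (A B C : Subgroup G)
    (hA : A ≤ C) (hB : B ≤ C) :
    Nat.card A * Nat.card B ≤ Nat.card C * Nat.card (A ⊓ B : Subgroup G) := by
  rw [← card_set_mul A B]
  refine Nat.mul_le_mul_right _ ?_
  refine Nat.card_mono (Set.toFinite _) ?_
  rintro x ⟨a, ha, b, hb, rfl⟩
  exact C.mul_mem (hA ha) (hB hb)


theorem stmt5 {G : Type*} [Group G] [Finite G] (H1 H2 H3 H4 : Subgroup G)
    (h : ((H1 ⊓ H2 ⊓ H3 : Subgroup G) : Set G) * ((H1 ⊓ H2 ⊓ H4 : Subgroup G) : Set G)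
      = ((H1 ⊓ H2 : Subgroup G) : Set G)) :
    Nat.card (H1 : Subgroup G) * Nat.card (H2 : Subgroup G) * Nat.card (H3 ⊓ H4 : Subgroup G) * Nat.card (H1 ⊓ H2 ⊓ H3 : Subgroup G) * Nat.card (H1 ⊓ H2 ⊓ H4 : Subgroup G) ≥ Nat.card (H1 ⊓ H2 : Subgroup G) * Nat.card (H1 ⊓ H3 : Subgroup G) * Nat.card (H1 ⊓ H4 : Subgroup G) * Nat.card (H2 ⊓ H3 : Subgroup G) * Nat.card (H2 ⊓ H4 : Subgroup G) := by
  -- notation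
  set T : Subgroup G := H1 ⊓ H2 ⊓ H3 ⊓ H4 with hT
  have eT3 : (H1 ⊓ H2 ⊓ H3) ⊓ (H1 ⊓ H2 ⊓ H4) = T := by
    ext x; simp [hT]; tauto
  -- key equality from hypothesis h
  have E : Nat.card (H1 ⊓ H2 : Subgroup G) * Nat.card T
      = Nat.card (H1 ⊓ H2 ⊓ H3 : Subgroup G) * Nat.card (H1 ⊓ H2 ⊓ H4 : Subgroup G) := by
    have := card_set_mul (H1 ⊓ H2 ⊓ H3) (H1 ⊓ H2 ⊓ H4)
    rw [h, eT3] at this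
    exact this
  have e1 : (H1 ⊓ H3) ⊓ (H1 ⊓ H4) = H1 ⊓ (H3 ⊓ H4) := by
    ext x; simp; tauto
  have e2 : (H2 ⊓ H3) ⊓ (H2 ⊓ H4) = H2 ⊓ (H3 ⊓ H4) := by
    ext x; simp; tauto
  have e3 : (H1 ⊓ (H3 ⊓ H4)) ⊓ (H2 ⊓ (H3 ⊓ H4)) = T := by
    ext x; simp [hT]; tauto
  have I1 : Nat.card (H1 ⊓ H3 : Subgroup G) * Nat.card (H1 ⊓ H4 : Subgroup G)
      ≤ Nat.card H1 * Nat.card (H1 ⊓ (H3 ⊓ H4) : Subgroup G) := by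
    have := card_mul_le (H1 ⊓ H3) (H1 ⊓ H4) H1 inf_le_left inf_le_left
    rwa [e1] at this
  have I2 : Nat.card (H2 ⊓ H3 : Subgroup G) * Nat.card (H2 ⊓ H4 : Subgroup G)
      ≤ Nat.card H2 * Nat.card (H2 ⊓ (H3 ⊓ H4) : Subgroup G) := by
    have := card_mul_le (H2 ⊓ H3) (H2 ⊓ H4) H2 inf_le_left inf_le_left
    rwa [e2] at this
  have I3 : Nat.card (H1 ⊓ (H3 ⊓ H4) : Subgroup G) * Nat.card (H2 ⊓ (H3 ⊓ H4) : Subgroup G)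
      ≤ Nat.card (H3 ⊓ H4 : Subgroup G) * Nat.card T := by
    have := card_mul_le (H1 ⊓ (H3 ⊓ H4)) (H2 ⊓ (H3 ⊓ H4)) (H3 ⊓ H4) inf_le_right inf_le_right
    rwa [e3] at this
  set a1 := Nat.card H1
  set a2 := Nat.card H2
  set c34 := Nat.card (H3 ⊓ H4 : Subgroup G)
  set k3 := Nat.card (H1 ⊓ H2 ⊓ H3 : Subgroup G)
  set k4 := Nat.card (H1 ⊓ H2 ⊓ H4 : Subgroup G)
  set p12 := Nat.card (H1 ⊓ H2 : Subgroup G)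
  set p13 := Nat.card (H1 ⊓ H3 : Subgroup G)
  set p14 := Nat.card (H1 ⊓ H4 : Subgroup G)
  set p23 := Nat.card (H2 ⊓ H3 : Subgroup G)
  set p24 := Nat.card (H2 ⊓ H4 : Subgroup G)
  set q1 := Nat.card (H1 ⊓ (H3 ⊓ H4) : Subgroup G)
  set q2 := Nat.card (H2 ⊓ (H3 ⊓ H4) : Subgroup G)
  set t := Nat.card T
  calc p12 * p13 * p14 * p23 * p24
      = p12 * ((p13 * p14) * (p23 * p24)) := by ring
    _ ≤ p12 * ((a1 * q1) * (a2 * q2)) := by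
        exact Nat.mul_le_mul_left _ (Nat.mul_le_mul I1 I2)
    _ = p12 * (a1 * a2 * (q1 * q2)) := by ring
    _ ≤ p12 * (a1 * a2 * (c34 * t)) := by
        exact Nat.mul_le_mul_left _ (Nat.mul_le_mul_left _ I3)
    _ = a1 * a2 * c34 * (p12 * t) := by ring
    _ = a1 * a2 * c34 * (k3 * k4) := by rw [E]
    _ = a1 * a2 * c34 * k3 * k4 := by ring
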